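/- arXiv:1911.12010 — 2 statements merged into one kernel-verified Lean document; each statement's English description precedes it below -/
import Mathlib

section
/- Let n be a positive integer and let 𝒮 and 𝒜 be linear differential operators on ℝⁿ with time-independent smooth coefficients, all of whose derivatives are bounded (so both map the Schwartz space 𝒮(ℝⁿ) into itself), such that 𝒮 is symmetric ((𝒮f,g) = (f,𝒮g) for all Schwartz f, g) and 𝒜 is anti-symmetric ((𝒜f,g) = −(f,𝒜g) for all Schwartz f, g) with respect to the L² inner product. Then for every g ∈ C^∞([0,1]; 𝒮(ℝⁿ)) with g(t) ≠ 0 for all t ∈ [0,1], and every t ∈ (0,1): ∂_t [ (𝒮g(t), g(t)) / ‖g(t)‖² ] ≥ [ (𝒮g(t), 𝒜g(t)) + (𝒜g(t), 𝒮g(t)) − (1/2)‖∂_t g(t) − 𝒜g(t) − 𝒮g(t)‖² ] / ‖g(t)‖². -/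
open MeasureTheory Set Filter Topology SchwartzMap Complex
open scoped ComplexConjugate

noncomputable section

/-- The `L²(ℝⁿ)` inner product `(f, g) = ∫ f conj(g)` of two functions. -/
def L2pair {n : ℕ} (f g : EuclideanSpace ℝ (Fin n) → ℂ) : ℂ :=
  ∫ x, f x * (starRingEnd ℂ) (g x)

namespace LogConvexAux

variable {n : ℕ}

local notation "𝓔" n => EuclideanSpace ℝ (Fin n)
local notation "𝓢n" n => SchwartzMap (EuclideanSpace ℝ (Fin n)) ℂ

lemma integrable_pair (f g : 𝓢n n) :
    Integrable (fun x => f x * conj (g x)) (volume : Measure (𝓔 n)) := by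
  have hg : Integrable (fun x => conj (g x)) (volume : Measure (𝓔 n)) :=
    (Complex.conjCLE.toContinuousLinearMap).integrable_comp g.integrable
  exact hg.bdd_mul f.continuous.aestronglyMeasurable
    (Eventually.of_forall fun x => norm_le_seminorm ℝ f x)

lemma integrable_normSq (f : 𝓢n n) :
    Integrable (fun x => ‖f x‖ ^ 2) (volume : Measure (𝓔 n)) := by
  have := (integrable_pair f f).re
  refine this.congr (Eventually.of_forall fun x => ?_)
  push_cast [Complex.mul_conj, Complex.normSq_eq_norm_sq]
  simp [← Complex.ofReal_pow]

lemma memL2 (f : 𝓢n n) : MemLp (⇑f) 2 (volume : Measure (𝓔 n)) :=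
  (memLp_two_iff_integrable_sq_norm f.continuous.aestronglyMeasurable).2
    (integrable_normSq f)


/-- Inclusion of Schwartz space into `L²` as a continuous (real-)linear map. -/
def toL2 : (𝓢n n) →L[ℝ] Lp ℂ 2 (volume : Measure (𝓔 n)) := by
  refine mkCLMtoNormedSpace (fun f => (memL2 f).toLp ⇑f)
    (fun f g => ?_) (fun a f => ?_) ?_
  · exact MemLp.toLp_add (memL2 f) (memL2 g)
  · exact MemLp.toLp_const_smul a (memL2 f)
  · set μ : Measure (𝓔 n) := volume
    set P : ℕ := μ.integrablePower with hP
    set K : ℝ := 2 ^ P * ∫ x : 𝓔 n, (1 + ‖x‖) ^ (-(P : ℝ)) ∂μ with hK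
    have hKnn : 0 ≤ K := by
      apply mul_nonneg (by positivity)
      exact integral_nonneg fun x => Real.rpow_nonneg (by positivity) _
    refine ⟨Finset.Iic (P, 0), Real.sqrt (2 * K), Real.sqrt_nonneg _, fun f => ?_⟩
    set M : ℝ := (Finset.Iic (P, 0)).sup (schwartzSeminormFamily ℝ (𝓔 n) ℂ) f with hM
    have hMnn : 0 ≤ M := apply_nonneg _ _
    have h00 : SchwartzMap.seminorm ℝ 0 0 f ≤ M := by
      have : schwartzSeminormFamily ℝ (𝓔 n) ℂ (0, 0) ≤
          (Finset.Iic (P, 0)).sup (schwartzSeminormFamily ℝ (𝓔 n) ℂ) :=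
        Finset.le_sup (by simp [Finset.mem_Iic, Prod.le_def])
      exact this f
    have hP0 : SchwartzMap.seminorm ℝ P 0 f ≤ M := by
      have : schwartzSeminormFamily ℝ (𝓔 n) ℂ (P, 0) ≤
          (Finset.Iic (P, 0)).sup (schwartzSeminormFamily ℝ (𝓔 n) ℂ) :=
        Finset.le_sup (by simp [Finset.mem_Iic, Prod.le_def])
      exact this f
    have hint : ∫ x, ‖f x‖ ∂μ ≤ K * (2 * M) := by
      have h := f.integral_pow_mul_iteratedFDeriv_le ℝ μ 0 0
      simp only [pow_zero, one_mul, norm_iteratedFDeriv_zero, zero_add] at h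
      refine h.trans ?_
      rw [hK]
      calc 2 ^ P * (∫ x : 𝓔 n, (1 + ‖x‖) ^ (-(P : ℝ)) ∂μ) *
            (SchwartzMap.seminorm ℝ 0 0 f + SchwartzMap.seminorm ℝ P 0 f)
          ≤ 2 ^ P * (∫ x : 𝓔 n, (1 + ‖x‖) ^ (-(P : ℝ)) ∂μ) * (M + M) := by
            apply mul_le_mul_of_nonneg_left (add_le_add h00 hP0)
            exact mul_nonneg (by positivity)
              (integral_nonneg fun x => Real.rpow_nonneg (by positivity) _)
        _ = _ := by ring
    have hsq : ∫ x, ‖f x‖ ^ 2 ∂μ ≤ 2 * K * M ^ 2 := by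
      have h1 : ∫ x, ‖f x‖ ^ 2 ∂μ ≤ ∫ x, SchwartzMap.seminorm ℝ 0 0 f * ‖f x‖ ∂μ := by
        refine integral_mono (integrable_normSq f) (f.integrable.norm.const_mul _) fun x => ?_
        rw [sq]
        exact mul_le_mul_of_nonneg_right (norm_le_seminorm ℝ f x) (norm_nonneg _)
      rw [integral_const_mul] at h1
      calc ∫ x, ‖f x‖ ^ 2 ∂μ ≤ SchwartzMap.seminorm ℝ 0 0 f * ∫ x, ‖f x‖ ∂μ := h1
        _ ≤ M * (K * (2 * M)) := by
            apply mul_le_mul h00 hint (integral_nonneg fun x => norm_nonneg _) hMnn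
        _ = 2 * K * M ^ 2 := by ring
    have hnorm : ‖(memL2 f).toLp ⇑f‖ ^ 2 = ∫ x, ‖f x‖ ^ 2 ∂μ := by
      set u : Lp ℂ 2 μ := (memL2 f).toLp ⇑f with hu
      have hae : ∀ᵐ x ∂μ, u x = f x := (memL2 f).coeFn_toLp
      rw [norm_sq_eq_re_inner (𝕜 := ℂ), MeasureTheory.L2.inner_def]
      have h1 : ∫ a, (inner ℂ (u a) (u a) : ℂ) ∂μ = ∫ x, (starRingEnd ℂ) (f x) * f x ∂μ :=
        integral_congr_ae (hae.mono fun x hx => by simp only [hx, RCLike.inner_apply, mul_comm])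
      have h2 : Integrable (fun x => (starRingEnd ℂ) (f x) * f x) μ :=
        (integrable_pair f f).congr (Eventually.of_forall fun x => by dsimp only; rw [mul_comm])
      rw [h1, ← integral_re h2]
      refine integral_congr_ae (Eventually.of_forall fun x => ?_)
      simp [Complex.conj_mul', Complex.normSq_eq_norm_sq,
        ← Complex.ofReal_pow]
    calc ‖(memL2 f).toLp ⇑f‖ = Real.sqrt (‖(memL2 f).toLp ⇑f‖ ^ 2) :=
          (Real.sqrt_sq (norm_nonneg _)).symm
      _ ≤ Real.sqrt (2 * K * M ^ 2) := Real.sqrt_le_sqrt (by rw [hnorm]; exact hsq)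
      _ = Real.sqrt (2 * K) * M := by
          rw [Real.sqrt_mul (by positivity), Real.sqrt_sq hMnn]


lemma coeFn_toL2 (f : 𝓢n n) : ⇑(toL2 f) =ᵐ[(volume : Measure (𝓔 n))] ⇑f :=
  (memL2 f).coeFn_toLp

lemma inner_toL2 (f g : 𝓢n n) :
    (inner ℂ (toL2 f) (toL2 g) : ℂ) = L2pair (⇑g) (⇑f) := by
  rw [MeasureTheory.L2.inner_def, L2pair]
  refine integral_congr_ae ?_
  filter_upwards [coeFn_toL2 f, coeFn_toL2 g] with x hf hg
  simp only [hf, hg, RCLike.inner_apply]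

lemma L2pair_conj (f g : 𝓢n n) :
    (starRingEnd ℂ) (L2pair (⇑f) (⇑g)) = L2pair (⇑g) (⇑f) := by
  rw [L2pair, L2pair, ← integral_conj]
  refine integral_congr_ae (Eventually.of_forall fun x => ?_)
  simp [mul_comm]

lemma L2pair_eq (f g : 𝓢n n) :
    L2pair (⇑f) (⇑g) = (inner ℂ (toL2 g) (toL2 f) : ℂ) := (inner_toL2 g f).symm

lemma norm_toL2_sq (f : 𝓢n n) : ‖toL2 f‖ ^ 2 = ∫ x, ‖f x‖ ^ 2 := by
  rw [norm_sq_eq_re_inner (𝕜 := ℂ), inner_toL2, L2pair, ← integral_re (integrable_pair f f)]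
  refine integral_congr_ae (Eventually.of_forall fun x => ?_)
  simp [Complex.mul_conj, Complex.normSq_eq_norm_sq, ← Complex.ofReal_pow]

lemma L2pair_self_re (f : 𝓢n n) : (L2pair (⇑f) (⇑f)).re = ∫ x, ‖f x‖ ^ 2 := by
  rw [← norm_toL2_sq, norm_sq_eq_re_inner (𝕜 := ℂ), inner_toL2]
  rfl

lemma toL2_ne_zero (f : 𝓢n n) (hf : f ≠ 0) : toL2 f ≠ 0 := by
  intro h
  apply hf
  have h0 : ⇑f =ᵐ[(volume : Measure (𝓔 n))] (fun _ => 0 : (𝓔 n) → ℂ) := by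
    have h1 : ⇑(toL2 f) =ᵐ[(volume : Measure (𝓔 n))] ⇑(0 : Lp ℂ 2 (volume : Measure (𝓔 n))) :=
      h ▸ EventuallyEq.rfl
    filter_upwards [coeFn_toL2 f, h1, Lp.coeFn_zero (E := ℂ) (p := 2)
      (μ := (volume : Measure (𝓔 n)))] with x h2 h3 h4
    rw [← h2, h3, h4]
    rfl
  have heq := (Continuous.ae_eq_iff_eq (volume : Measure (𝓔 n)) f.continuous
    continuous_const).mp h0
  ext x
  exact congrFun heq x

lemma hasDerivAt_toL2 {F : ℝ → 𝓢n n} {F' : 𝓢n n} {t : ℝ}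
    (h : Tendsto (fun h : ℝ => h⁻¹ • (F (t + h) - F t)) (𝓝[≠] 0) (𝓝 F')) :
    HasDerivAt (fun s => toL2 (F s)) (toL2 F') t := by
  rw [hasDerivAt_iff_tendsto_slope_zero]
  have h2 := ((toL2 (n := n)).continuous.tendsto F').comp h
  refine h2.congr fun h => ?_
  simp only [Function.comp_apply, _root_.map_smul, map_sub]

end LogConvexAux

open LogConvexAux in
set_option maxHeartbeats 1000000 in
/-- **Abstract logarithmic convexity lemma** (Lemma 2.3).  Let `𝒮` and `𝒜` be
(time-independent, continuous) linear operators on Schwartz space — such as differential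
operators with smooth bounded coefficients — with `𝒮` symmetric and `𝒜` anti-symmetric
for the `L²(ℝⁿ)` inner product.  Then for every `g ∈ C^∞([0,1]; 𝒮(ℝⁿ))` (encoded by the
family `dg` of time derivatives of all orders, taken in the topology of Schwartz space,
with `dg 0 = g`) that never vanishes on `[0,1]`, and every `t ∈ (0,1)`,
`∂_t[(𝒮g,g)/‖g‖²] ≥ [(𝒮g,𝒜g) + (𝒜g,𝒮g) − ½‖∂_t g − 𝒜g − 𝒮g‖²]/‖g‖²`. -/
theorem abstract_log_convexity_lemma
    (n : ℕ) (hn : 0 < n)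
    (S A : SchwartzMap (EuclideanSpace ℝ (Fin n)) ℂ →L[ℂ]
      SchwartzMap (EuclideanSpace ℝ (Fin n)) ℂ)
    (hS : ∀ f g : SchwartzMap (EuclideanSpace ℝ (Fin n)) ℂ,
      L2pair (⇑(S f)) (⇑g) = L2pair (⇑f) (⇑(S g)))
    (hA : ∀ f g : SchwartzMap (EuclideanSpace ℝ (Fin n)) ℂ,
      L2pair (⇑(A f)) (⇑g) = -L2pair (⇑f) (⇑(A g)))
    (dg : ℕ → ℝ → SchwartzMap (EuclideanSpace ℝ (Fin n)) ℂ)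
    (hcont : ∀ j : ℕ, Continuous (dg j))
    (hderiv : ∀ (j : ℕ) (t : ℝ),
      Tendsto (fun h : ℝ => h⁻¹ • (dg j (t + h) - dg j t)) (𝓝[≠] 0) (𝓝 (dg (j + 1) t)))
    (g : ℝ → SchwartzMap (EuclideanSpace ℝ (Fin n)) ℂ) (hg : dg 0 = g)
    (hne : ∀ t ∈ Icc (0:ℝ) 1, g t ≠ 0) :
    ∀ t ∈ Ioo (0:ℝ) 1,
      deriv (fun s =>
          (L2pair (⇑(S (g s))) (⇑(g s))).re / (∫ x, ‖g s x‖ ^ 2)) t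
        ≥ ((L2pair (⇑(S (g t))) (⇑(A (g t))) + L2pair (⇑(A (g t))) (⇑(S (g t)))).re
            - (1 / 2) * ∫ x, ‖dg 1 t x - A (g t) x - S (g t) x‖ ^ 2)
          / (∫ x, ‖g t x‖ ^ 2) := by
  subst hg
  intro t ht
  set T := LogConvexAux.toL2 (n := n) with hT
  -- symmetry transferred to L²
  have hsym : ∀ f f' : SchwartzMap (EuclideanSpace ℝ (Fin n)) ℂ,
      (inner ℂ (T f) (T (S f')) : ℂ) = inner ℂ (T (S f)) (T f') := by
    intro f f'
    rw [inner_toL2, inner_toL2]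
    exact hS f' f
  have hre_symm : ∀ x y : Lp ℂ 2 (volume : Measure (EuclideanSpace ℝ (Fin n))),
      (inner ℂ x y : ℂ).re = (inner ℂ y x : ℂ).re := by
    intro x y
    rw [← inner_conj_symm]
    exact Complex.conj_re _
  have hanti : ∀ f : SchwartzMap (EuclideanSpace ℝ (Fin n)) ℂ,
      (inner ℂ (T f) (T (A f)) : ℂ).re = 0 := by
    intro f
    have h1 : (inner ℂ (T f) (T (A f)) : ℂ) = L2pair (⇑(A f)) (⇑f) := inner_toL2 _ _
    have h3 : L2pair (⇑(A f)) (⇑f) = - (starRingEnd ℂ) (L2pair (⇑(A f)) (⇑f)) := by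
      rw [L2pair_conj]
      exact hA f f
    have h4 := congrArg Complex.re h3
    simp only [Complex.neg_re, Complex.conj_re] at h4
    rw [h1]
    linarith
  -- derivative facts
  have keyId : ∀ τ : ℝ, HasDerivAt (fun s => T (dg 0 s)) (T (dg 1 τ)) τ := fun τ =>
    hasDerivAt_toL2 (hderiv 0 τ)
  have keyS : ∀ τ : ℝ, HasDerivAt (fun s => T (S (dg 0 s))) (T (S (dg 1 τ))) τ := by
    intro τ
    apply hasDerivAt_toL2
    have h2 := ((S.continuous.tendsto (dg 1 τ))).comp (hderiv 0 τ)
    refine h2.congr fun h => ?_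
    simp only [Function.comp_apply, map_sub, ContinuousLinearMap.map_smul_of_tower]
  -- the two real functions
  set Q : ℝ → ℝ := fun s => (inner ℂ (T (dg 0 s)) (T (S (dg 0 s))) : ℂ).re with hQdef
  set N : ℝ → ℝ := fun s => (inner ℂ (T (dg 0 s)) (T (dg 0 s)) : ℂ).re with hNdef
  have hfun : (fun s => (L2pair (⇑(S (dg 0 s))) (⇑(dg 0 s))).re / (∫ x, ‖dg 0 s x‖ ^ 2))
      = fun s => Q s / N s := by
    funext s
    rw [L2pair_eq, ← L2pair_self_re (dg 0 s), L2pair_eq]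
  -- abbreviations at time t
  set u := T (dg 0 t) with hu
  set v := T (dg 1 t) with hv
  set su := T (S (dg 0 t)) with hsu
  set sv := T (S (dg 1 t)) with hsv
  set au := T (A (dg 0 t)) with hau
  have hNt : N t = ‖u‖ ^ 2 := (norm_sq_eq_re_inner (𝕜 := ℂ) u).symm
  have hune : u ≠ 0 := toL2_ne_zero _ (hne t (Ioo_subset_Icc_self ht))
  have hNpos : 0 < N t := by
    rw [hNt]
    exact pow_pos (norm_pos_iff.mpr hune) 2
  -- derivatives of Q and N
  have hQ' : HasDerivAt Q (2 * (inner ℂ su v : ℂ).re) t := by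
    have h := HasDerivAt.inner ℂ (keyId t) (keyS t)
    have h2 := Complex.reCLM.hasFDerivAt.comp_hasDerivAt t h
    simp only [Function.comp_def, Complex.reCLM_apply] at h2
    have h3 : ((inner ℂ u sv : ℂ) + (inner ℂ v su : ℂ)).re = 2 * (inner ℂ su v : ℂ).re := by
      rw [Complex.add_re, hsym (dg 0 t) (dg 1 t), hre_symm v su]
      ring
    rw [← h3]
    exact h2
  have hN' : HasDerivAt N (2 * (inner ℂ u v : ℂ).re) t := by
    have h := HasDerivAt.inner ℂ (keyId t) (keyId t)
    have h2 := Complex.reCLM.hasFDerivAt.comp_hasDerivAt t h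
    simp only [Function.comp_def, Complex.reCLM_apply] at h2
    have h3 : ((inner ℂ u v : ℂ) + (inner ℂ v u : ℂ)).re = 2 * (inner ℂ u v : ℂ).re := by
      rw [Complex.add_re, hre_symm v u]
      ring
    rw [← h3]
    exact h2
  have hdiv := hQ'.div hN' (ne_of_gt hNpos)
  rw [hfun, show (fun s => Q s / N s) = Q / N from rfl, hdiv.deriv]
  -- rewrite the right-hand side
  have hrhs1 : (L2pair (⇑(S (dg 0 t))) (⇑(A (dg 0 t)))
      + L2pair (⇑(A (dg 0 t))) (⇑(S (dg 0 t)))).re = 2 * (inner ℂ su au : ℂ).re := by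
    rw [L2pair_eq, L2pair_eq, Complex.add_re, hre_symm au su]
    ring
  set W : SchwartzMap (EuclideanSpace ℝ (Fin n)) ℂ := dg 1 t - A (dg 0 t) - S (dg 0 t) with hW
  have hrhs2 : (∫ x, ‖dg 1 t x - A (dg 0 t) x - S (dg 0 t) x‖ ^ 2) = ‖v - au - su‖ ^ 2 := by
    have h2 : T W = v - au - su := by rw [hW, map_sub, map_sub]
    rw [show (∫ x, ‖dg 1 t x - A (dg 0 t) x - S (dg 0 t) x‖ ^ 2) = ∫ x, ‖W x‖ ^ 2 from rfl,
      ← norm_toL2_sq, h2]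
  rw [hrhs1, hrhs2]
  -- the core Hilbert-space inequality
  set w := v - au - su with hw
  have hva : v = w + au + su := by rw [hw]; abel
  set s₁ : ℝ := (inner ℂ su w : ℂ).re with hs₁
  set u₁ : ℝ := (inner ℂ u w : ℂ).re with hu₁
  set R : ℝ := (inner ℂ su au : ℂ).re with hR
  have hsusu : (inner ℂ su su : ℂ).re = ‖su‖ ^ 2 := (norm_sq_eq_re_inner (𝕜 := ℂ) su).symm
  have ha : (inner ℂ su v : ℂ).re = s₁ + R + ‖su‖ ^ 2 := by
    have hx : (inner ℂ su v : ℂ).re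
        = (inner ℂ su w : ℂ).re + (inner ℂ su au : ℂ).re + (inner ℂ su su : ℂ).re := by
      rw [hva, inner_add_right, inner_add_right, Complex.add_re, Complex.add_re]
    rw [hx, hsusu]
  have huau : (inner ℂ u au : ℂ).re = 0 := hanti (dg 0 t)
  have hQt : Q t = (inner ℂ u su : ℂ).re := rfl
  have hb : (inner ℂ u v : ℂ).re = u₁ + Q t := by
    have hx : (inner ℂ u v : ℂ).re
        = (inner ℂ u w : ℂ).re + (inner ℂ u au : ℂ).re + (inner ℂ u su : ℂ).re := by
      rw [hva, inner_add_right, inner_add_right, Complex.add_re, Complex.add_re]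
    rw [hx, huau, hQt]
    ring
  -- the auxiliary vector P
  set P := ((N t : ℂ) • su - (Q t : ℂ) • u :
    Lp ℂ 2 (volume : Measure (EuclideanSpace ℝ (Fin n)))) with hPdef
  have hPw : (inner ℂ P w : ℂ).re = N t * s₁ - Q t * u₁ := by
    rw [hPdef, inner_sub_left, inner_smul_left, inner_smul_left, Complex.sub_re,
      Complex.conj_ofReal, Complex.conj_ofReal, Complex.re_ofReal_mul, Complex.re_ofReal_mul]
  have hsuu : (inner ℂ su u : ℂ).re = Q t := by rw [hre_symm su u]
  have hP2 : ‖P‖ ^ 2 = N t ^ 2 * ‖su‖ ^ 2 - N t * Q t ^ 2 := by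
    rw [hPdef, @norm_sub_sq ℂ]
    have e1 : ‖(N t : ℂ) • su‖ = N t * ‖su‖ := by
      rw [norm_smul, Complex.norm_real, Real.norm_eq_abs, abs_of_pos hNpos]
    have e2 : ‖(Q t : ℂ) • u‖ ^ 2 = Q t ^ 2 * ‖u‖ ^ 2 := by
      rw [norm_smul, Complex.norm_real, Real.norm_eq_abs, mul_pow, _root_.sq_abs]
    have e3 : RCLike.re (inner ℂ ((N t : ℂ) • su) ((Q t : ℂ) • u) : ℂ) = N t * (Q t * Q t) := by
      rw [inner_smul_left, inner_smul_right, Complex.conj_ofReal]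
      rw [show ((N t : ℂ) * ((Q t : ℂ) * (inner ℂ su u : ℂ)))
        = ((N t : ℂ) * (Q t : ℂ)) * (inner ℂ su u : ℂ) by ring]
      rw [← Complex.ofReal_mul]
      have h5 : RCLike.re (((N t * Q t : ℝ) : ℂ) * (inner ℂ su u : ℂ))
          = (N t * Q t) * (inner ℂ su u : ℂ).re := Complex.re_ofReal_mul _ _
      rw [h5, hsuu]
      ring
    rw [e1, e2, e3, mul_pow]
    have h6 : ‖u‖ ^ 2 = N t := hNt.symm
    rw [h6]
    ring
  have hCS : N t * s₁ - Q t * u₁ ≥ -(‖P‖ * ‖w‖) := by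
    rw [← hPw]
    have h1 : ‖(inner ℂ P w : ℂ)‖ ≤ ‖P‖ * ‖w‖ := norm_inner_le_norm P w
    have h2 : |(inner ℂ P w : ℂ).re| ≤ ‖(inner ℂ P w : ℂ)‖ := Complex.abs_re_le_norm _
    have h3 := neg_abs_le (inner ℂ P w : ℂ).re
    linarith
  -- final algebra
  have hNint : (∫ x, ‖(dg 0 t) x‖ ^ 2 : ℝ) = N t := by
    rw [hNdef, ← L2pair_self_re (dg 0 t), L2pair_eq]
  rw [hNint, ge_iff_le, div_le_div_iff₀ hNpos (pow_pos hNpos 2), ha, hb]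
  have hCS2 : 2 * N t * (-(‖P‖ * ‖w‖)) ≤ 2 * N t * (N t * s₁ - Q t * u₁) :=
    mul_le_mul_of_nonneg_left hCS (by linarith)
  nlinarith [hCS2, hP2, sq_nonneg (‖P‖ - N t * ‖w‖ / 2), hNpos, norm_nonneg P, norm_nonneg w]

end
end

section
/- Let n be a positive integer, p > 1, and b, γ > 0. Set a = γ / (1 + (2γ/b)^{1/(p−1)})^{p−1}. Then for all x, y ∈ ℝⁿ: a|x|^p − b|x−y|^p − γ|y|^p ≤ −(b/2)|x−y|^p. -/
open MeasureTheory

/-- Convexity splitting: for `s, u ≥ 0`, `t > 0` and `p ≥ 1`,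
`(s+u)^p ≤ ((1+t)^(p-1)/t^(p-1)) s^p + (1+t)^(p-1) u^p`. -/
lemma weight_transfer_aux (p t s u : ℝ) (hp : 1 ≤ p) (ht : 0 < t) (hs : 0 ≤ s) (hu : 0 ≤ u) :
    (s + u) ^ p ≤ (1 + t) ^ (p - 1) / t ^ (p - 1) * s ^ p + (1 + t) ^ (p - 1) * u ^ p := by
  have h1t : (0:ℝ) < 1 + t := by linarith
  set w₁ : ℝ := t / (1 + t) with hw₁
  set w₂ : ℝ := 1 / (1 + t) with hw₂
  set z₁ : ℝ := (1 + t) / t * s with hz₁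
  set z₂ : ℝ := (1 + t) * u with hz₂
  have key := Real.rpow_arith_mean_le_arith_mean_rpow Finset.univ ![w₁, w₂] ![z₁, z₂]
    (by
      intro i _
      fin_cases i <;> simp [hw₁, hw₂] <;> positivity)
    (by
      simp [Fin.sum_univ_succ, hw₁, hw₂]
      field_simp
      ring)
    (by
      intro i _
      fin_cases i <;> simp [hz₁, hz₂] <;> positivity)
    hp
  simp only [Fin.sum_univ_succ, Finset.sum_const, Matrix.cons_val_zero, Matrix.cons_val_one,
    Matrix.head_cons, Fin.sum_univ_zero, add_zero, Fin.succ_zero_eq_one] at key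
  have e1 : w₁ * z₁ + w₂ * z₂ = s + u := by
    rw [hw₁, hw₂, hz₁, hz₂]; field_simp
  rw [e1] at key
  refine key.trans (le_of_eq ?_)
  have hz₁' : z₁ ^ p = (1 + t) ^ p / t ^ p * s ^ p := by
    rw [hz₁, Real.mul_rpow (by positivity) hs, Real.div_rpow h1t.le ht.le]
  have hz₂' : z₂ ^ p = (1 + t) ^ p * u ^ p := by
    rw [hz₂, Real.mul_rpow h1t.le hu]
  have hr1 : (1 + t) ^ (p - 1) = (1 + t) ^ p / (1 + t) := by
    rw [Real.rpow_sub h1t, Real.rpow_one]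
  have hr2 : t ^ (p - 1) = t ^ p / t := by
    rw [Real.rpow_sub ht, Real.rpow_one]
  rw [hz₁', hz₂', hr1, hr2, hw₁, hw₂]
  have htp : (0:ℝ) < t ^ p := Real.rpow_pos_of_pos ht p
  field_simp

/-- **Convexity inequality for superexponential weights** (key pointwise estimate in
Lemma 2.1).  Let `n ≥ 1`, `p > 1` and `b, γ > 0`, and set
`a = γ / (1 + (2γ/b)^{1/(p−1)})^{p−1}`.  Then for all `x, y ∈ ℝⁿ`,
`a|x|^p − b|x−y|^p − γ|y|^p ≤ −(b/2)|x−y|^p`. -/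
theorem weight_transfer_convexity_inequality
    (n : ℕ) (hn : 0 < n) (p b γ : ℝ) (hp : 1 < p) (hb : 0 < b) (hγ : 0 < γ)
    (a : ℝ) (ha : a = γ / (1 + (2 * γ / b) ^ (1 / (p - 1))) ^ (p - 1)) :
    ∀ x y : EuclideanSpace ℝ (Fin n),
      a * ‖x‖ ^ p - b * ‖x - y‖ ^ p - γ * ‖y‖ ^ p ≤ -(b / 2) * ‖x - y‖ ^ p := by
  intro x y
  set t : ℝ := (2 * γ / b) ^ (1 / (p - 1)) with htdef
  have hq : (0:ℝ) < 2 * γ / b := by positivity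
  have ht : 0 < t := Real.rpow_pos_of_pos hq _
  have h1t : (0:ℝ) < 1 + t := by linarith
  have hp1 : p - 1 ≠ 0 := by linarith
  have htp : t ^ (p - 1) = 2 * γ / b := by
    rw [htdef, ← Real.rpow_mul hq.le, one_div_mul_cancel hp1, Real.rpow_one]
  have h1tp : (0:ℝ) < (1 + t) ^ (p - 1) := Real.rpow_pos_of_pos h1t _
  set s : ℝ := ‖x - y‖ with hsdef
  set u : ℝ := ‖y‖ with hudef
  have hs : 0 ≤ s := norm_nonneg _
  have hu : 0 ≤ u := norm_nonneg _
  have hxsu : ‖x‖ ≤ s + u := by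
    calc ‖x‖ = ‖(x - y) + y‖ := by rw [sub_add_cancel]
    _ ≤ ‖x - y‖ + ‖y‖ := norm_add_le _ _
  have hxp : ‖x‖ ^ p ≤ (s + u) ^ p :=
    Real.rpow_le_rpow (norm_nonneg _) hxsu (by linarith)
  have hapos : 0 < a := by rw [ha]; positivity
  have key := weight_transfer_aux p t s u hp.le ht hs hu
  have step : a * ‖x‖ ^ p ≤ a * ((1 + t) ^ (p - 1) / t ^ (p - 1) * s ^ p
      + (1 + t) ^ (p - 1) * u ^ p) :=
    mul_le_mul_of_nonneg_left (hxp.trans key) hapos.le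
  have e1 : a * ((1 + t) ^ (p - 1) / t ^ (p - 1) * s ^ p + (1 + t) ^ (p - 1) * u ^ p)
      = b / 2 * s ^ p + γ * u ^ p := by
    rw [ha, htp]
    have htne : ((1:ℝ) + (2 * γ / b) ^ (1 / (p - 1))) ^ (p - 1) ≠ 0 := ne_of_gt h1tp
    field_simp
  rw [e1] at step
  nlinarith [step]
end
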